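/- Suppose ρ is irreducible and V admits a G-invariant positive-definite Hermitian form. Then V admits a conjugate-linear G-equivariant bijection σ with σ∘σ = −id_V if and only if V admits a nonzero G-invariant alternating bilinear form. -/

import Mathlib

section QAux

variable {G V : Type*} [Group G] [AddCommGroup V] [Module ℂ V]

theorem qaux_riesz [FiniteDimensional ℂ V] (h : V → V → ℂ)
    (hadd₁ : ∀ x y z : V, h (x + y) z = h x z + h y z)
    (hsmul₁ : ∀ (c : ℂ) (x y : V), h (c • x) y = c * h x y)
    (hherm : ∀ x y : V, h y x = (starRingEnd ℂ) (h x y))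
    (hpos : ∀ x : V, x ≠ 0 → 0 < (h x x).re)
    (f : V →ₗ[ℂ] ℂ) : ∃ z : V, ∀ y, f y = h y z := by
  have hadd₂ : ∀ x y z : V, h z (x + y) = h z x + h z y := by
    intro x y z
    rw [hherm, hadd₁, map_add, ← hherm, ← hherm]
  have hsmul₂ : ∀ (c : ℂ) (x y : V), h y (c • x) = (starRingEnd ℂ) c * h y x := by
    intro c x y
    rw [hherm, hsmul₁, map_mul, ← hherm]
  letI core : InnerProductSpace.Core ℂ V :=
  { inner := fun x y => h y x
    conj_inner_symm := fun x y => show (starRingEnd ℂ) (h x y) = h y x from (hherm x y).symm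
    re_inner_nonneg := by
      intro x
      show 0 ≤ (h x x).re
      rcases eq_or_ne x 0 with rfl | hx
      · have h0 : h (0 : V) (0 : V) = 0 := by
          have := hsmul₁ 0 0 0; simpa using this
        simp [h0]
      · exact (hpos x hx).le
    add_left := fun x y z => hadd₂ x y z
    smul_left := fun x y r => hsmul₂ r x y
    definite := by
      intro x hx
      by_contra hx0
      have := hpos x hx0
      rw [show h x x = 0 from hx] at this
      simp at this }
  letI : NormedAddCommGroup V := core.toNormedAddCommGroup
  letI : InnerProductSpace ℂ V := InnerProductSpace.ofCore core.toCore
  haveI : CompleteSpace V := FiniteDimensional.complete ℂ V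
  obtain ⟨z, hz⟩ := (InnerProductSpace.toDual ℂ V).surjective (LinearMap.toContinuousLinearMap f)
  refine ⟨z, fun y => ?_⟩
  have h1 : InnerProductSpace.toDual ℂ V z y = f y := by rw [hz]; rfl
  rw [← h1, InnerProductSpace.toDual_apply_apply]
  rfl

theorem qaux_schur [FiniteDimensional ℂ V] [Nontrivial V]
    (ρ : G →* (V ≃ₗ[ℂ] V))
    (hirr : ∀ p : Submodule ℂ V, (∀ g : G, ∀ x ∈ p, ρ g x ∈ p) → p = ⊥ ∨ p = ⊤)
    (A : V →ₗ[ℂ] V) (hcomm : ∀ (g : G) (v : V), A (ρ g v) = ρ g (A v)) :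
    ∃ c : ℂ, ∀ v : V, A v = c • v := by
  obtain ⟨μ, hμ⟩ := Module.End.exists_eigenvalue A
  refine ⟨μ, fun v => ?_⟩
  have hinv : ∀ g : G, ∀ x ∈ Module.End.eigenspace A μ, ρ g x ∈ Module.End.eigenspace A μ := by
    intro g x hx
    rw [Module.End.mem_eigenspace_iff] at hx ⊢
    rw [hcomm, hx, map_smul]
  rcases hirr _ hinv with hbot | htop
  · exact absurd hbot hμ
  · have : v ∈ Module.End.eigenspace A μ := htop ▸ Submodule.mem_top
    exact Module.End.mem_eigenspace_iff.mp this

end QAux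
theorem quaternionic_structure_iff_alternating_form
    {G V : Type*} [Group G] [AddCommGroup V] [Module ℂ V]
    [FiniteDimensional ℂ V] [Nontrivial V]
    (ρ : G →* (V ≃ₗ[ℂ] V))
    (hirr : ∀ p : Submodule ℂ V, (∀ g : G, ∀ x ∈ p, ρ g x ∈ p) → p = ⊥ ∨ p = ⊤)
    (h : V → V → ℂ)
    (hadd₁ : ∀ x y z : V, h (x + y) z = h x z + h y z)
    (hsmul₁ : ∀ (c : ℂ) (x y : V), h (c • x) y = c * h x y)
    (hherm : ∀ x y : V, h y x = (starRingEnd ℂ) (h x y))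
    (hpos : ∀ x : V, x ≠ 0 → 0 < (h x x).re)
    (hinvh : ∀ (g : G) (x y : V), h (ρ g x) (ρ g y) = h x y) :
    (∃ σ : V → V,
        (∀ a b : V, σ (a + b) = σ a + σ b) ∧
        (∀ (c : ℂ) (v : V), σ (c • v) = (starRingEnd ℂ) c • σ v) ∧
        (∀ (g : G) (v : V), σ (ρ g v) = ρ g (σ v)) ∧
        Function.Bijective σ ∧
        (∀ v : V, σ (σ v) = -v)) ↔
    (∃ q : V →ₗ[ℂ] V →ₗ[ℂ] ℂ, q ≠ 0 ∧
        (∀ (g : G) (x y : V), q (ρ g x) (ρ g y) = q x y) ∧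
        (∀ x : V, q x x = 0)) := by
  -- basic consequences of the hypotheses on h
  have hadd₂ : ∀ x y z : V, h z (x + y) = h z x + h z y := by
    intro x y z; rw [hherm, hadd₁, map_add, ← hherm, ← hherm]
  have hsmul₂ : ∀ (c : ℂ) (x y : V), h y (c • x) = (starRingEnd ℂ) c * h y x := by
    intro c x y; rw [hherm, hsmul₁, map_mul, ← hherm]
  have hneg₁ : ∀ x y : V, h (-x) y = - h x y := by
    intro x y; rw [← neg_one_smul ℂ x, hsmul₁]; ring
  have hneg₂ : ∀ x y : V, h x (-y) = - h x y := by
    intro x y; rw [← neg_one_smul ℂ y, hsmul₂]; simp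
  have hzero₂ : ∀ x : V, h x 0 = 0 := by
    intro x; have := hsmul₂ 0 0 x; simpa using this
  have hxx_ne : ∀ x : V, x ≠ 0 → h x x ≠ 0 := by
    intro x hx h0; have := hpos x hx; rw [h0] at this; simp at this
  have hnd : ∀ z : V, (∀ y, h y z = 0) → z = 0 := by
    intro z hz; by_contra h0; exact hxx_ne z h0 (hz z)
  have hsub₂ : ∀ x y z : V, h z (x - y) = h z x - h z y := by
    intro x y z; rw [sub_eq_add_neg, hadd₂, hneg₂]; ring
  have huniq : ∀ z w : V, (∀ y, h y z = h y w) → z = w := by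
    intro z w hzw
    have : z - w = 0 := hnd _ (fun y => by rw [hsub₂, hzw, sub_self])
    exact sub_eq_zero.mp this
  have hρinv : ∀ (g : G) (x : V), ρ g⁻¹ (ρ g x) = x := by
    intro g x
    have h1 : ρ g⁻¹ * ρ g = 1 := by rw [← map_mul, inv_mul_cancel, map_one]
    have h2 : (ρ g⁻¹ * ρ g) x = x := by rw [h1]; rfl
    exact h2
  have hρinv' : ∀ (g : G) (x : V), ρ g (ρ g⁻¹ x) = x := by
    intro g x; have := hρinv g⁻¹ x; rwa [inv_inv] at this
  have hinvh₂ : ∀ (g : G) (x y : V), h x (ρ g y) = h (ρ g⁻¹ x) y := by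
    intro g x y
    conv_lhs => rw [← hρinv' g x]
    rw [hinvh]
  constructor
  · rintro ⟨σ, hσadd, hσsmul, hσequiv, _hσbij, hσsq⟩
    have hσ0 : σ 0 = 0 := by simpa using hσsmul 0 0
    have hex : ∀ x : V, ∃ z : V, ∀ y : V, (starRingEnd ℂ) (h (σ y) (σ x)) = h y z := by
      intro x
      obtain ⟨z, hz⟩ := qaux_riesz h hadd₁ hsmul₁ hherm hpos
        { toFun := fun y => (starRingEnd ℂ) (h (σ y) (σ x))
          map_add' := by
            intro a b
            show (starRingEnd ℂ) (h (σ (a + b)) (σ x)) =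
              (starRingEnd ℂ) (h (σ a) (σ x)) + (starRingEnd ℂ) (h (σ b) (σ x))
            rw [hσadd, hadd₁, map_add]
          map_smul' := by
            intro c a
            show (starRingEnd ℂ) (h (σ (c • a)) (σ x)) =
              (RingHom.id ℂ) c • (starRingEnd ℂ) (h (σ a) (σ x))
            rw [hσsmul, hsmul₁, map_mul]
            simp }
      exact ⟨z, fun y => hz y⟩
    choose A hA using hex
    have hAadd : ∀ x x', A (x + x') = A x + A x' := by
      intro x x'
      apply huniq
      intro y
      rw [← hA, hσadd, hadd₂, map_add, hA, hA, hadd₂]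
    have hAsmul : ∀ (c : ℂ) (x : V), A (c • x) = c • A x := by
      intro c x
      apply huniq
      intro y
      rw [← hA, hσsmul, hsmul₂, map_mul, Complex.conj_conj, hA, hsmul₂]
    have hAcomm : ∀ (g : G) (v : V), A (ρ g v) = ρ g (A v) := by
      intro g v
      apply huniq
      intro y
      calc h y (A (ρ g v)) = (starRingEnd ℂ) (h (σ y) (σ (ρ g v))) := (hA _ _).symm
        _ = (starRingEnd ℂ) (h (σ y) (ρ g (σ v))) := by rw [hσequiv]
        _ = (starRingEnd ℂ) (h (ρ g⁻¹ (σ y)) (σ v)) := by rw [hinvh₂]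
        _ = (starRingEnd ℂ) (h (σ (ρ g⁻¹ y)) (σ v)) := by rw [hσequiv]
        _ = h (ρ g⁻¹ y) (A v) := hA _ _
        _ = h y (ρ g (A v)) := (hinvh₂ g y (A v)).symm
    obtain ⟨c, hc⟩ := qaux_schur ρ hirr
      { toFun := A
        map_add' := hAadd
        map_smul' := by
          intro c x
          show A (c • x) = (RingHom.id ℂ) c • A x
          simpa using hAsmul c x } hAcomm
    have hcA : ∀ v : V, A v = c • v := hc
    have hstar : ∀ a b : V, h (σ a) (σ b) = c * (starRingEnd ℂ) (h a b) := by
      intro a b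
      have h1 : (starRingEnd ℂ) (h (σ a) (σ b)) = h a (A b) := hA b a
      rw [hcA b, hsmul₂] at h1
      have h2 := congrArg (starRingEnd ℂ) h1
      simpa [map_mul] using h2
    obtain ⟨v₀, hv₀⟩ := exists_ne (0 : V)
    have hσv₀ : σ v₀ ≠ 0 := by
      intro e
      have h2 := hσsq v₀
      rw [e, hσ0] at h2
      exact hv₀ (neg_eq_zero.mp h2.symm)
    have hα : (starRingEnd ℂ) (h v₀ v₀) = h v₀ v₀ := (hherm v₀ v₀).symm
    have hβ : (starRingEnd ℂ) (h (σ v₀) (σ v₀)) = h (σ v₀) (σ v₀) := (hherm _ _).symm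
    -- c is conj-fixed
    have hcc : (starRingEnd ℂ) c = c := by
      have e1 : h (σ v₀) (σ v₀) = c * h v₀ v₀ := by rw [hstar, hα]
      have e2 := congrArg (starRingEnd ℂ) e1
      rw [hβ, map_mul, hα] at e2
      have := e1.symm.trans e2
      exact (mul_right_cancel₀ (hxx_ne v₀ hv₀) this).symm
    -- c * c = 1
    have hc1 : c * c = 1 := by
      have e1 : h v₀ v₀ = c * (c * h v₀ v₀) :=
        calc h v₀ v₀ = h (-v₀) (-v₀) := by rw [hneg₁, hneg₂, neg_neg]
          _ = h (σ (σ v₀)) (σ (σ v₀)) := by rw [hσsq]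
          _ = c * (starRingEnd ℂ) (h (σ v₀) (σ v₀)) := hstar _ _
          _ = c * (h (σ v₀) (σ v₀)) := by rw [hβ]
          _ = c * (c * (starRingEnd ℂ) (h v₀ v₀)) := by rw [hstar v₀ v₀]
          _ = c * (c * h v₀ v₀) := by rw [hα]
      have e2 : (1 : ℂ) * h v₀ v₀ = (c * c) * h v₀ v₀ := by
        rw [one_mul, mul_assoc]; exact e1
      exact (mul_right_cancel₀ (hxx_ne v₀ hv₀) e2).symm
    have hcone : c = 1 := by
      rcases mul_self_eq_one_iff.mp hc1 with h1 | h1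
      · exact h1
      · exfalso
        have e1 : h (σ v₀) (σ v₀) = c * h v₀ v₀ := by rw [hstar, hα]
        rw [h1] at e1
        have := hpos (σ v₀) hσv₀
        rw [e1] at this
        simp only [neg_one_mul, Complex.neg_re] at this
        have := hpos v₀ hv₀
        linarith
    have hstar1 : ∀ a b : V, h (σ a) (σ b) = (starRingEnd ℂ) (h a b) := by
      intro a b; rw [hstar, hcone, one_mul]
    -- the alternating form
    refine ⟨LinearMap.mk₂ ℂ (fun x y => h x (σ y))
      (fun x x' y => hadd₁ x x' (σ y))
      (fun cc x y => hsmul₁ cc x (σ y))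
      (fun x y y' => by
        show h x (σ (y + y')) = h x (σ y) + h x (σ y')
        rw [hσadd, hadd₂])
      (fun cc x y => by
        show h x (σ (cc • y)) = cc • h x (σ y)
        rw [hσsmul, hsmul₂, Complex.conj_conj, smul_eq_mul]), ?_, ?_, ?_⟩
    · intro hq0
      have : h (σ v₀) (σ v₀) = 0 := by
        have := congrArg (fun q => q (σ v₀) v₀) hq0
        simpa using this
      exact hxx_ne (σ v₀) hσv₀ this
    · intro g x y
      simp only [LinearMap.mk₂_apply]
      rw [hσequiv, hinvh]
    · intro x
      simp only [LinearMap.mk₂_apply]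
      have hskew : h x (σ x) = - h x (σ x) := by
        have e1 : h (-σ (σ x)) (σ x) = h x (σ x) := by rw [hσsq, neg_neg]
        have e2 : h (-σ (σ x)) (σ x) = - h x (σ x) := by
          rw [hneg₁, hstar1, hherm, Complex.conj_conj]
        exact e1.symm.trans e2
      have h2 : (2 : ℂ) * h x (σ x) = 0 := by linear_combination hskew
      rcases mul_eq_zero.mp h2 with h3 | h3
      · norm_num at h3
      · exact h3
  · rintro ⟨q, hq0, hqinv, hqalt⟩
    have hskew : ∀ x y : V, q x y = - q y x := by
      intro x y
      have e := hqalt (x + y)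
      simp only [map_add, LinearMap.add_apply, hqalt x, hqalt y] at e
      linear_combination e
    have hNbot : ∀ y : V, (∀ x, q x y = 0) → y = 0 := by
      intro y hy
      let N : Submodule ℂ V :=
        { carrier := {v | ∀ x, q x v = 0}
          add_mem' := by intro a b ha hb x; rw [map_add, ha, hb, add_zero]
          zero_mem' := by intro x; rw [map_zero]
          smul_mem' := by intro cc a ha x; rw [map_smul, ha x, smul_zero] }
      have hNinv : ∀ g : G, ∀ v ∈ N, ρ g v ∈ N := by
        intro g v hv x
        have e := hqinv g (ρ g⁻¹ x) v
        rw [hρinv'] at e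
        rw [e]
        exact hv _
      rcases hirr N hNinv with hb | ht
      · have : y ∈ N := hy
        rw [hb] at this
        simpa using this
      · exfalso
        apply hq0
        apply LinearMap.ext; intro a
        apply LinearMap.ext; intro b
        have hbN : b ∈ N := ht ▸ Submodule.mem_top
        simpa using hbN a
    have hex : ∀ y : V, ∃ z : V, ∀ x : V, q x y = h x z := by
      intro y
      obtain ⟨z, hz⟩ := qaux_riesz h hadd₁ hsmul₁ hherm hpos (q.flip y)
      exact ⟨z, fun x => hz x⟩
    choose σ hσspec using hex
    have hσadd : ∀ a b : V, σ (a + b) = σ a + σ b := by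
      intro a b
      apply huniq
      intro x
      rw [← hσspec, map_add, hσspec, hσspec, hadd₂]
    have hσsmul : ∀ (cc : ℂ) (v : V), σ (cc • v) = (starRingEnd ℂ) cc • σ v := by
      intro cc v
      apply huniq
      intro x
      rw [← hσspec, map_smul, hσspec, hsmul₂, Complex.conj_conj, smul_eq_mul]
    have hσequiv : ∀ (g : G) (v : V), σ (ρ g v) = ρ g (σ v) := by
      intro g v
      apply huniq
      intro x
      rw [← hσspec]
      have e1 : q x (ρ g v) = q (ρ g⁻¹ x) v := by
        have e := hqinv g (ρ g⁻¹ x) v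
        rw [hρinv'] at e
        exact e
      rw [e1, hσspec v]
      have e2 := hinvh g (ρ g⁻¹ x) (σ v)
      rw [hρinv'] at e2
      exact e2.symm
    have hσinj0 : ∀ v : V, σ v = 0 → v = 0 := by
      intro v hv
      apply hNbot
      intro x
      rw [hσspec, hv, hzero₂]
    have hσneg : ∀ v : V, σ (-v) = - σ v := by
      intro v
      have := hσsmul (-1) v
      simpa using this
    obtain ⟨c, hc⟩ := qaux_schur ρ hirr
      { toFun := fun v => σ (σ v)
        map_add' := by
          intro a b
          show σ (σ (a + b)) = σ (σ a) + σ (σ b)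
          rw [hσadd, hσadd]
        map_smul' := by
          intro cc v
          show σ (σ (cc • v)) = (RingHom.id ℂ) cc • σ (σ v)
          rw [hσsmul, hσsmul, Complex.conj_conj]
          rfl }
      (by intro g v; show σ (σ (ρ g v)) = ρ g (σ (σ v)); rw [hσequiv, hσequiv])
    have hcB : ∀ v : V, σ (σ v) = c • v := hc
    obtain ⟨v₀, hv₀⟩ := exists_ne (0 : V)
    have hσv₀ : σ v₀ ≠ 0 := fun e => hv₀ (hσinj0 v₀ e)
    have hα : (starRingEnd ℂ) (h v₀ v₀) = h v₀ v₀ := (hherm v₀ v₀).symm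
    have hβ : (starRingEnd ℂ) (h (σ v₀) (σ v₀)) = h (σ v₀) (σ v₀) := (hherm _ _).symm
    have e1 : (starRingEnd ℂ) c * h v₀ v₀ = - h (σ v₀) (σ v₀) := by
      have a1 : q v₀ (σ v₀) = (starRingEnd ℂ) c * h v₀ v₀ := by
        rw [hσspec, hcB, hsmul₂]
      have a2 : q v₀ (σ v₀) = - h (σ v₀) (σ v₀) := by
        rw [hskew, hσspec]
      rw [← a1, a2]
    have hcc : (starRingEnd ℂ) c = c := by
      have e2 := congrArg (starRingEnd ℂ) e1
      rw [map_mul, Complex.conj_conj, hα, map_neg, hβ] at e2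
      have e3 := e1.trans e2.symm
      exact mul_right_cancel₀ (hxx_ne v₀ hv₀) e3
    have him : c.im = 0 := Complex.conj_eq_iff_im.mp hcc
    have hαim : (h v₀ v₀).im = 0 := Complex.conj_eq_iff_im.mp hα
    have hcre : c.re < 0 := by
      have e2 := congrArg Complex.re e1
      rw [Complex.mul_re, Complex.conj_re, Complex.conj_im, him, Complex.neg_re] at e2
      simp only [neg_zero, zero_mul, sub_zero] at e2
      have p1 := hpos v₀ hv₀
      have p2 := hpos (σ v₀) hσv₀
      nlinarith
    set t : ℝ := Real.sqrt (-c.re) with ht_def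
    have ht : 0 < t := Real.sqrt_pos.mpr (by linarith)
    have ht2 : t * t = -c.re := Real.mul_self_sqrt (by linarith)
    have hcre' : ((c.re : ℝ) : ℂ) = c := Complex.conj_eq_iff_re.mp hcc
    have hkey : ((t⁻¹ : ℝ) : ℂ) * ((t⁻¹ : ℝ) : ℂ) * ((c.re : ℝ) : ℂ) = -1 := by
      have hr : (t⁻¹ * t⁻¹ * c.re : ℝ) = -1 := by
        rw [show c.re = -(t * t) by linarith]
        field_simp
      exact_mod_cast hr
    have hσ'sq : ∀ v : V, ((t⁻¹ : ℝ) : ℂ) • σ (((t⁻¹ : ℝ) : ℂ) • σ v) = -v := by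
      intro v
      rw [hσsmul, Complex.conj_ofReal, hcB, smul_smul, smul_smul, ← hcre', hkey]
      simp
    refine ⟨fun v => ((t⁻¹ : ℝ) : ℂ) • σ v, ?_, ?_, ?_, ?_, ?_⟩
    · intro a b
      show ((t⁻¹ : ℝ) : ℂ) • σ (a + b) = ((t⁻¹ : ℝ) : ℂ) • σ a + ((t⁻¹ : ℝ) : ℂ) • σ b
      rw [hσadd, smul_add]
    · intro cc v
      show ((t⁻¹ : ℝ) : ℂ) • σ (cc • v) = (starRingEnd ℂ) cc • (((t⁻¹ : ℝ) : ℂ) • σ v)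
      rw [hσsmul, smul_comm]
    · intro g v
      show ((t⁻¹ : ℝ) : ℂ) • σ ((ρ g) v) = (ρ g) (((t⁻¹ : ℝ) : ℂ) • σ v)
      rw [hσequiv, map_smul]
    · rw [Function.bijective_iff_has_inverse]
      refine ⟨fun w => - (((t⁻¹ : ℝ) : ℂ) • σ w), ?_, ?_⟩
      · intro v
        show -(((t⁻¹ : ℝ) : ℂ) • σ (((t⁻¹ : ℝ) : ℂ) • σ v)) = v
        rw [hσ'sq, neg_neg]
      · intro v
        show ((t⁻¹ : ℝ) : ℂ) • σ (-(((t⁻¹ : ℝ) : ℂ) • σ v)) = v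
        rw [hσneg, smul_neg, hσ'sq, neg_neg]
    · intro v
      exact hσ'sq v
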